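/- Let v : ℝⁿ → ℝ be convex with strict epigraph E(v) = {(x,t) : t > v(x)}. Fix r > 0 and let Z be the set of points y = (x, v(x)) on the graph of v such that there exists c' ∈ ℝ^{n+1} with the open ball B(c',r) ⊆ E(v) and y ∈ ∂B(c',r) (the sphere of center c' and radius r). Then for each y ∈ Z the center c' is unique, and the map γ : Z → ℝ^{n+1} sending y to this center c' is Lipschitz with constant 1. -/

import Mathlib

open Filter Metric Set
open scoped Topology RealInnerProductSpace

/-- Variational inequality for a nearest point on a convex set. -/
lemma proj_inner_le {F : Type*} [NormedAddCommGroup F] [InnerProductSpace ℝ F]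
    {K : Set F} (hK : Convex ℝ K) {y c : F} (hc : c ∈ K)
    (hmin : ∀ w ∈ K, ‖y - c‖ ≤ ‖y - w‖) :
    ∀ w ∈ K, ⟪y - c, w - c⟫ ≤ 0 := by
  intro w hw
  by_contra h
  push_neg at h
  set I := ⟪y - c, w - c⟫ with hI
  have hwc : w - c ≠ 0 := by
    intro h0
    rw [hI, h0, inner_zero_right] at h
    exact lt_irrefl _ h
  have hN : (0:ℝ) < ‖w - c‖ ^ 2 := pow_pos (norm_pos_iff.mpr hwc) 2
  set t : ℝ := min 1 (I / ‖w - c‖ ^ 2) with ht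
  have ht0 : 0 < t := lt_min one_pos (div_pos h hN)
  have ht1 : t ≤ 1 := min_le_left _ _
  have htN : t * ‖w - c‖ ^ 2 ≤ I := by
    have : t ≤ I / ‖w - c‖ ^ 2 := min_le_right _ _
    calc t * ‖w - c‖ ^ 2 ≤ (I / ‖w - c‖ ^ 2) * ‖w - c‖ ^ 2 :=
          mul_le_mul_of_nonneg_right this hN.le
      _ = I := div_mul_cancel₀ _ (ne_of_gt hN)
  have hmem : c + t • (w - c) ∈ K := hK.add_smul_sub_mem hc hw ⟨ht0.le, ht1⟩
  have hle := hmin _ hmem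
  have hrw : y - (c + t • (w - c)) = (y - c) - t • (w - c) := by abel
  have hexp : ‖y - (c + t • (w - c))‖ ^ 2
      = ‖y - c‖ ^ 2 - 2 * (t * I) + t ^ 2 * ‖w - c‖ ^ 2 := by
    rw [hrw, norm_sub_sq_real, real_inner_smul_right, norm_smul, Real.norm_eq_abs,
      abs_of_pos ht0, mul_pow, ← hI]
  have hsq : ‖y - c‖ ^ 2 ≤ ‖y - (c + t • (w - c))‖ ^ 2 := by
    have h1 : (0:ℝ) ≤ ‖y - c‖ := norm_nonneg _
    nlinarith [hle]
  rw [hexp] at hsq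
  have h2I : 2 * I ≤ t * ‖w - c‖ ^ 2 := by
    have : 2 * (t * I) ≤ t * (t * ‖w - c‖ ^ 2) := by nlinarith
    have := (mul_le_mul_iff_right₀ ht0).mp (by linarith [this] : t * (2 * I) ≤ t * (t * ‖w - c‖ ^ 2))
    linarith
  linarith

theorem stmt5 {n : ℕ} (v : EuclideanSpace ℝ (Fin n) → ℝ)
    (hconv : ConvexOn ℝ Set.univ v) (r : ℝ) (hr : 0 < r) :
    let e := WithLp.equiv 2 (EuclideanSpace ℝ (Fin n) × ℝ)
    let E : Set (WithLp 2 (EuclideanSpace ℝ (Fin n) × ℝ)) := {p | v (e p).1 < (e p).2}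
    let Z : Set (WithLp 2 (EuclideanSpace ℝ (Fin n) × ℝ)) :=
      {y | (e y).2 = v (e y).1 ∧ ∃ c', Metric.ball c' r ⊆ E ∧ y ∈ Metric.sphere c' r}
    (∀ y ∈ Z, ∃! c', Metric.ball c' r ⊆ E ∧ y ∈ Metric.sphere c' r) ∧
    ∃ γ : WithLp 2 (EuclideanSpace ℝ (Fin n) × ℝ) → WithLp 2 (EuclideanSpace ℝ (Fin n) × ℝ),
      LipschitzOnWith 1 γ Z ∧
      ∀ y ∈ Z, Metric.ball (γ y) r ⊆ E ∧ y ∈ Metric.sphere (γ y) r := by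
  intro e E Z
  classical
  -- E is convex
  have hEconv : Convex ℝ E := by
    intro p hp q hq a b ha hb hab
    simp only [E, Set.mem_setOf_eq] at hp hq ⊢
    have hfst : (e (a • p + b • q)).1 = a • (e p).1 + b • (e q).1 := rfl
    have hsnd : (e (a • p + b • q)).2 = a * (e p).2 + b * (e q).2 := rfl
    have hle := hconv.2 (Set.mem_univ (e p).1) (Set.mem_univ (e q).1) ha hb hab
    rw [hfst, hsnd]
    rcases ha.lt_or_eq with ha' | ha'
    · have : a * v (e p).1 + b * v (e q).1 < a * (e p).2 + b * (e q).2 := by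
        have h1 : a * v (e p).1 < a * (e p).2 := by nlinarith
        have h2 : b * v (e q).1 ≤ b * (e q).2 := by nlinarith
        linarith
      calc v (a • (e p).1 + b • (e q).1) ≤ a • v (e p).1 + b • v (e q).1 := hle
        _ < a * (e p).2 + b * (e q).2 := by simpa [smul_eq_mul] using this
    · have hb1 : b = 1 := by linarith
      have : a * v (e p).1 + b * v (e q).1 < a * (e p).2 + b * (e q).2 := by
        rw [← ha', hb1]; simpa using hq
      calc v (a • (e p).1 + b • (e q).1) ≤ a • v (e p).1 + b • v (e q).1 := hle
        _ < a * (e p).2 + b * (e q).2 := by simpa [smul_eq_mul] using this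
  -- The set of admissible centers
  set K : Set (WithLp 2 (EuclideanSpace ℝ (Fin n) × ℝ)) :=
    {c | Metric.ball c r ⊆ E} with hKdef
  have hKconv : Convex ℝ K := by
    intro c₁ h₁ c₂ h₂ a b ha hb hab
    intro z hz
    rw [Metric.mem_ball] at hz
    have hz1 : z - (a • c₁ + b • c₂) + c₁ ∈ Metric.ball c₁ r := by
      rw [Metric.mem_ball, dist_eq_norm]
      simpa [add_sub_cancel_right] using (by rwa [dist_eq_norm] at hz)
    have hz2 : z - (a • c₁ + b • c₂) + c₂ ∈ Metric.ball c₂ r := by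
      rw [Metric.mem_ball, dist_eq_norm]
      simpa [add_sub_cancel_right] using (by rwa [dist_eq_norm] at hz)
    have := hEconv (h₁ hz1) (h₂ hz2) ha hb hab
    have hzeq : a • (z - (a • c₁ + b • c₂) + c₁) + b • (z - (a • c₁ + b • c₂) + c₂) = z := by
      have hb1 : b = 1 - a := by linarith
      rw [hb1]
      module
    rwa [hzeq] at this
  -- graph points are at distance ≥ r from every admissible center
  have hdist : ∀ y : WithLp 2 (EuclideanSpace ℝ (Fin n) × ℝ), (e y).2 = v (e y).1 →
      ∀ c ∈ K, r ≤ dist y c := by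
    intro y hy c hc
    by_contra h
    push_neg at h
    have hyE : y ∈ E := hc (Metric.mem_ball.mpr h)
    simp only [E, Set.mem_setOf_eq, hy] at hyE
    exact lt_irrefl _ hyE
  -- variational inequality for an admissible touching center
  have key : ∀ y : WithLp 2 (EuclideanSpace ℝ (Fin n) × ℝ), (e y).2 = v (e y).1 →
      ∀ c, Metric.ball c r ⊆ E → y ∈ Metric.sphere c r →
      ∀ w ∈ K, ⟪y - c, w - c⟫ ≤ 0 := by
    intro y hy c hcE hcs
    refine proj_inner_le hKconv hcE ?_
    intro w hw
    rw [← dist_eq_norm, ← dist_eq_norm]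
    rw [Metric.mem_sphere] at hcs
    rw [hcs]
    exact hdist y hy w hw
  -- monotonicity: two touching centers for two graph points
  have hmono : ∀ y₁ y₂ c₁ c₂ : WithLp 2 (EuclideanSpace ℝ (Fin n) × ℝ),
      (e y₁).2 = v (e y₁).1 → (e y₂).2 = v (e y₂).1 →
      Metric.ball c₁ r ⊆ E → y₁ ∈ Metric.sphere c₁ r →
      Metric.ball c₂ r ⊆ E → y₂ ∈ Metric.sphere c₂ r →
      dist c₁ c₂ ≤ dist y₁ y₂ := by
    intro y₁ y₂ c₁ c₂ hg₁ hg₂ hb₁ hs₁ hb₂ hs₂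
    have h₁ : ⟪y₁ - c₁, c₂ - c₁⟫ ≤ 0 := key y₁ hg₁ c₁ hb₁ hs₁ c₂ hb₂
    have h₂ : ⟪y₂ - c₂, c₁ - c₂⟫ ≤ 0 := key y₂ hg₂ c₂ hb₂ hs₂ c₁ hb₁
    have e1 : 0 ≤ ⟪c₁ - c₂, y₁ - c₁⟫ := by
      rw [real_inner_comm, show c₁ - c₂ = -(c₂ - c₁) from (neg_sub _ _).symm,
        inner_neg_right]
      linarith
    have e2 : ⟪c₁ - c₂, y₂ - c₂⟫ ≤ 0 := by
      rw [real_inner_comm]; exact h₂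
    have hsum : ⟪c₁ - c₂, y₁ - y₂⟫
        = ⟪c₁ - c₂, c₁ - c₂⟫ + ⟪c₁ - c₂, y₁ - c₁⟫ - ⟪c₁ - c₂, y₂ - c₂⟫ := by
      rw [← inner_add_right, ← inner_sub_right]
      congr 1
      abel
    have hCS : ⟪c₁ - c₂, y₁ - y₂⟫ ≤ ‖c₁ - c₂‖ * ‖y₁ - y₂‖ := real_inner_le_norm _ _
    have hself : ⟪c₁ - c₂, c₁ - c₂⟫ = ‖c₁ - c₂‖ ^ 2 := real_inner_self_eq_norm_sq _
    have hkey : ‖c₁ - c₂‖ ^ 2 ≤ ‖c₁ - c₂‖ * ‖y₁ - y₂‖ := by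
      rw [← hself]; linarith [hsum ▸ hCS, e1, e2]
    have hnn : (0:ℝ) ≤ ‖c₁ - c₂‖ := norm_nonneg _
    have hnn2 : (0:ℝ) ≤ ‖y₁ - y₂‖ := norm_nonneg _
    rw [dist_eq_norm, dist_eq_norm]
    nlinarith
  refine ⟨?_, ?_⟩
  · rintro y ⟨hyg, c, hc⟩
    refine ⟨c, hc, ?_⟩
    rintro c' ⟨hb', hs'⟩
    have h₁ : ⟪y - c, c' - c⟫ ≤ 0 := key y hyg c hc.1 hc.2 c' hb'
    have h₂ : ⟪y - c', c - c'⟫ ≤ 0 := key y hyg c' hb' hs' c hc.1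
    have hrw : c' - c = (y - c) - (y - c') := by abel
    have : ⟪c' - c, c' - c⟫ ≤ 0 := by
      nth_rewrite 1 [hrw]
      rw [inner_sub_left]
      have : ⟪y - c', c' - c⟫ = -⟪y - c', c - c'⟫ := by
        rw [show c' - c = -(c - c') from (neg_sub _ _).symm, inner_neg_right]
      linarith [this]
    have hz : c' - c = 0 := by
      have := real_inner_self_nonpos.mp this
      exact this
    exact sub_eq_zero.mp hz
  · set γ : WithLp 2 (EuclideanSpace ℝ (Fin n) × ℝ) → WithLp 2 (EuclideanSpace ℝ (Fin n) × ℝ) :=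
      fun y => if h : y ∈ Z then Classical.choose h.2 else y with hγdef
    have hγspec : ∀ y (hy : y ∈ Z),
        Metric.ball (γ y) r ⊆ E ∧ y ∈ Metric.sphere (γ y) r := by
      intro y hy
      rw [hγdef]
      simp only [dif_pos hy]
      exact Classical.choose_spec hy.2
    refine ⟨γ, ?_, hγspec⟩
    apply LipschitzOnWith.of_dist_le_mul
    intro y₁ hy₁ y₂ hy₂
    obtain ⟨hb₁, hs₁⟩ := hγspec y₁ hy₁
    obtain ⟨hb₂, hs₂⟩ := hγspec y₂ hy₂
    have := hmono y₁ y₂ (γ y₁) (γ y₂) hy₁.1 hy₂.1 hb₁ hs₁ hb₂ hs₂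
    simpa using this
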